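/- Define the symbol a(ξ) = ∫_{ℝ^n} (1 − cos(ξ·y)) π(y) dy for ξ ∈ ℝ^n. There exist constants C₁, C₂ > 0, depending only on n, α and c₁, such that for every ξ ∈ ℝ^n one has |ξ|^α ≤ C₁ a(ξ) + C₂. -/

import Mathlib

open MeasureTheory Metric Set


private abbrev Eucl (n : ℕ) := EuclideanSpace ℝ (Fin n)

private lemma nontriv_eucl {n : ℕ} (hn : 1 ≤ n) : Nontrivial (Eucl n) :=
  ⟨⟨EuclideanSpace.single ⟨0, hn⟩ 1, 0, by
    intro h; have := congrArg norm h; simp at this⟩⟩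

private lemma intOn_ball {n : ℕ} (hn : 1 ≤ n) {β : ℝ} (hβ : -(n : ℝ) < β) :
    IntegrableOn (fun y : Eucl n => ‖y‖ ^ β) (ball 0 1) volume := by
  haveI : Nontrivial (Eucl n) := nontriv_eucl hn
  have hmeas : Measurable (fun y : Eucl n => ‖y‖ ^ β) := by fun_prop
  refine ⟨hmeas.aestronglyMeasurable, ?_⟩
  show (∫⁻ y in ball (0 : Eucl n) 1, ‖‖y‖ ^ β‖₊ ∂volume) < ⊤
  set S : ℕ → Set (Eucl n) := fun k =>
    {y : Eucl n | (2 : ℝ)⁻¹ ^ (k + 1) < ‖y‖ ∧ ‖y‖ ≤ (2 : ℝ)⁻¹ ^ k} with hS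
  have hSmeas : ∀ k, MeasurableSet (S k) := by
    intro k
    have : S k = (fun y : Eucl n => ‖y‖) ⁻¹' (Ioc ((2:ℝ)⁻¹ ^ (k+1)) ((2:ℝ)⁻¹ ^ k)) := rfl
    rw [this]; exact measurable_norm measurableSet_Ioc
  have hcover : ball (0 : Eucl n) 1 \ {0} ⊆ ⋃ k, S k := by
    intro y hy
    have hy0 : 0 < ‖y‖ := by
      simpa [norm_pos_iff] using hy.2
    have hy1 : ‖y‖ < 1 := by simpa [mem_ball, dist_zero_right] using hy.1
    have hex : ∃ m, (2 : ℝ)⁻¹ ^ m < ‖y‖ := exists_pow_lt_of_lt_one hy0 (by norm_num)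
    set k := Nat.find hex with hk
    have hklt : (2 : ℝ)⁻¹ ^ k < ‖y‖ := Nat.find_spec hex
    rcases Nat.eq_zero_or_pos k with h0 | hpos
    · rw [h0] at hklt; simp at hklt; linarith
    · obtain ⟨j, hj⟩ : ∃ j, k = j + 1 := ⟨k - 1, (Nat.succ_pred_eq_of_pos hpos).symm⟩
      have hmin : ¬ ((2 : ℝ)⁻¹ ^ j < ‖y‖) := Nat.find_min hex (by omega)
      rw [hj] at hklt
      exact mem_iUnion.2 ⟨j, hklt, le_of_not_gt hmin⟩
  have hsub : ∀ k, S k ⊆ closedBall (0 : Eucl n) ((2 : ℝ)⁻¹ ^ k) := by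
    intro k y hy; simpa [mem_closedBall, dist_zero_right] using hy.2
  set ω := volume (ball (0 : Eucl n) 1) with hω
  have hωlt : ω < ⊤ := measure_ball_lt_top
  set q : ℝ := (2 : ℝ)⁻¹ ^ (β + n) with hq
  have hq0 : 0 ≤ q := Real.rpow_nonneg (by norm_num) _
  have hq1 : q < 1 := Real.rpow_lt_one (by norm_num) (by norm_num) (by linarith)
  have hterm : ∀ k, (∫⁻ y in S k, ‖‖y‖ ^ β‖₊ ∂volume)
      ≤ (ENNReal.ofReal ((2 : ℝ) ^ |β|) * ω) * (ENNReal.ofReal q) ^ k := by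
    intro k
    have hpk : (0 : ℝ) < (2 : ℝ)⁻¹ ^ k := by positivity
    have hbd : ∀ y ∈ S k, ‖y‖ ^ β ≤ (2 : ℝ) ^ |β| * ((2 : ℝ)⁻¹ ^ k) ^ β := by
      intro y hy
      obtain ⟨h1, h2⟩ := hy
      have hy0 : 0 < ‖y‖ := lt_trans (by positivity) h1
      rcases le_or_gt 0 β with hβ0 | hβ0
      · have := Real.rpow_le_rpow (norm_nonneg y) h2 hβ0
        have h1le : (1 : ℝ) ≤ (2 : ℝ) ^ |β| :=
          Real.one_le_rpow one_le_two (abs_nonneg β)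
        nlinarith [Real.rpow_nonneg (le_of_lt hpk) β]
      · have hstep : ‖y‖ ^ β ≤ ((2 : ℝ)⁻¹ ^ (k + 1)) ^ β :=
          Real.rpow_le_rpow_of_nonpos (by positivity) (le_of_lt h1) (le_of_lt hβ0)
        have heq : ((2 : ℝ)⁻¹ ^ (k + 1)) ^ β = (2 : ℝ) ^ |β| * ((2 : ℝ)⁻¹ ^ k) ^ β := by
          rw [pow_succ, Real.mul_rpow (by positivity) (by norm_num),
            abs_of_neg hβ0, ← Real.rpow_natCast ((2:ℝ)⁻¹) k]
          rw [Real.inv_rpow (by norm_num) β, ← Real.rpow_neg (by norm_num)]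
          ring
        rw [heq] at hstep; exact hstep
    calc (∫⁻ y in S k, ‖‖y‖ ^ β‖₊ ∂volume)
        ≤ ∫⁻ _ in S k, ENNReal.ofReal ((2 : ℝ) ^ |β| * ((2 : ℝ)⁻¹ ^ k) ^ β) ∂volume := by
          refine setLIntegral_mono' (hSmeas k) (fun y hy => ?_)
          rw [← enorm_eq_nnnorm, Real.enorm_eq_ofReal (Real.rpow_nonneg (norm_nonneg y) β)]
          exact ENNReal.ofReal_le_ofReal (hbd y hy)
      _ = ENNReal.ofReal ((2 : ℝ) ^ |β| * ((2 : ℝ)⁻¹ ^ k) ^ β) * volume (S k) := by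
          rw [setLIntegral_const]
      _ ≤ ENNReal.ofReal ((2 : ℝ) ^ |β| * ((2 : ℝ)⁻¹ ^ k) ^ β) *
            (ENNReal.ofReal (((2 : ℝ)⁻¹ ^ k) ^ n) * ω) := by
          refine mul_le_mul_right ?_ _
          have h := measure_mono (μ := (volume : Measure (Eucl n))) (hsub k)
          rw [Measure.addHaar_closedBall (volume : Measure (Eucl n)) 0 (le_of_lt hpk),
            finrank_euclideanSpace_fin] at h
          rw [hω]
          exact h
      _ = (ENNReal.ofReal ((2 : ℝ) ^ |β|) * ω) * (ENNReal.ofReal q) ^ k := by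
          rw [ENNReal.ofReal_mul (by positivity), ← ENNReal.ofReal_pow hq0]
          have hkey : ((2 : ℝ)⁻¹ ^ k) ^ β * ((2 : ℝ)⁻¹ ^ k) ^ (n : ℕ) = q ^ k := by
            rw [← Real.rpow_natCast ((2:ℝ)⁻¹ ^ k) n, ← Real.rpow_add hpk,
              ← Real.rpow_natCast ((2:ℝ)⁻¹) k, ← Real.rpow_mul (by norm_num),
              mul_comm (k : ℝ) (β + n), Real.rpow_mul (by norm_num), Real.rpow_natCast, hq]
          calc ENNReal.ofReal ((2:ℝ) ^ |β|) * ENNReal.ofReal (((2:ℝ)⁻¹ ^ k) ^ β) *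
                (ENNReal.ofReal (((2 : ℝ)⁻¹ ^ k) ^ n) * ω)
              = (ENNReal.ofReal ((2:ℝ) ^ |β|) * ω) *
                (ENNReal.ofReal (((2:ℝ)⁻¹ ^ k) ^ β) * ENNReal.ofReal (((2 : ℝ)⁻¹ ^ k) ^ n)) := by
                ring
            _ = (ENNReal.ofReal ((2:ℝ) ^ |β|) * ω) * ENNReal.ofReal (q ^ k) := by
                rw [← ENNReal.ofReal_mul (Real.rpow_nonneg (le_of_lt hpk) β), hkey]
  have hzero : (∫⁻ y in ({0} : Set (Eucl n)), ‖‖y‖ ^ β‖₊ ∂volume) = 0 := by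
    rw [Measure.restrict_eq_zero.2 (measure_singleton 0), lintegral_zero_measure]
  calc (∫⁻ y in ball (0 : Eucl n) 1, ‖‖y‖ ^ β‖₊ ∂volume)
      ≤ ∫⁻ y in (ball (0 : Eucl n) 1 \ {0}) ∪ {0}, ‖‖y‖ ^ β‖₊ ∂volume := by
        refine lintegral_mono_set (fun y hy => ?_)
        by_cases h : y = 0
        · exact Or.inr (by simp [h])
        · exact Or.inl ⟨hy, h⟩
    _ ≤ (∫⁻ y in ball (0 : Eucl n) 1 \ {0}, ‖‖y‖ ^ β‖₊ ∂volume)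
        + ∫⁻ y in ({0} : Set (Eucl n)), ‖‖y‖ ^ β‖₊ ∂volume := lintegral_union_le _ _ _
    _ = ∫⁻ y in ball (0 : Eucl n) 1 \ {0}, ‖‖y‖ ^ β‖₊ ∂volume := by rw [hzero, add_zero]
    _ ≤ ∫⁻ y in ⋃ k, S k, ‖‖y‖ ^ β‖₊ ∂volume := lintegral_mono_set hcover
    _ ≤ ∑' k, ∫⁻ y in S k, ‖‖y‖ ^ β‖₊ ∂volume := lintegral_iUnion_le _ _
    _ ≤ ∑' k, (ENNReal.ofReal ((2 : ℝ) ^ |β|) * ω) * (ENNReal.ofReal q) ^ k :=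
        ENNReal.tsum_le_tsum hterm
    _ = (ENNReal.ofReal ((2 : ℝ) ^ |β|) * ω) * (1 - ENNReal.ofReal q)⁻¹ := by
        rw [ENNReal.tsum_mul_left, ENNReal.tsum_geometric]
    _ < ⊤ := by
        refine ENNReal.mul_lt_top (ENNReal.mul_lt_top ENNReal.ofReal_lt_top hωlt) ?_
        refine ENNReal.inv_lt_top.2 ?_
        rw [tsub_pos_iff_lt]
        exact lt_of_lt_of_le (ENNReal.ofReal_lt_one.2 hq1) le_rfl


private lemma cos_lb {t : ℝ} (ht : |t| ≤ 1) : t ^ 2 / 8 ≤ 1 - Real.cos t := by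
  have hπ : |t| ≤ Real.pi := le_trans ht (by linarith [Real.pi_gt_three])
  have h := Real.cos_le_one_sub_mul_cos_sq hπ
  have hπ4 : Real.pi ≤ 4 := Real.pi_le_four
  have hπ0 : 0 < Real.pi := Real.pi_pos
  have h2 : (1 : ℝ) / 8 ≤ 2 / Real.pi ^ 2 := by
    rw [div_le_div_iff₀ (by norm_num) (by positivity)]
    nlinarith
  nlinarith [sq_nonneg t]

private lemma intOn_tail {n : ℕ} {γ : ℝ} (hγ : γ < -(n : ℝ)) :
    IntegrableOn (fun y : Eucl n => ‖y‖ ^ γ) {y : Eucl n | 1 ≤ ‖y‖} volume := by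
  have hγ0 : γ ≤ 0 := by have : (0:ℝ) ≤ n := Nat.cast_nonneg n; linarith
  have hint : Integrable (fun y : Eucl n => (2 : ℝ) ^ (-γ) * (1 + ‖y‖) ^ (-(-γ))) volume := by
    refine (integrable_one_add_norm ?_).const_mul _
    rw [finrank_euclideanSpace_fin]; linarith
  have hs : MeasurableSet {y : Eucl n | 1 ≤ ‖y‖} := by
    have : {y : Eucl n | 1 ≤ ‖y‖} = (fun y : Eucl n => ‖y‖) ⁻¹' (Ici 1) := rfl
    rw [this]; exact measurable_norm measurableSet_Ici
  refine Integrable.mono' hint.integrableOn ?_ ?_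
  · exact (Measurable.aestronglyMeasurable (by fun_prop))
  · rw [ae_restrict_iff' hs]
    refine ae_of_all _ (fun y hy => ?_)
    have hy1 : (1 : ℝ) ≤ ‖y‖ := hy
    have h1 : (0 : ℝ) < (1 + ‖y‖) / 2 := by linarith
    have h2 : (1 + ‖y‖) / 2 ≤ ‖y‖ := by linarith
    have h3 : ‖y‖ ^ γ ≤ ((1 + ‖y‖) / 2) ^ γ :=
      Real.rpow_le_rpow_of_nonpos h1 h2 hγ0
    have h4 : ((1 + ‖y‖) / 2) ^ γ = (2 : ℝ) ^ (-γ) * (1 + ‖y‖) ^ γ := by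
      rw [Real.div_rpow (by linarith) (by norm_num), Real.rpow_neg (by norm_num)]
      field_simp
    rw [Real.norm_eq_abs, abs_of_nonneg (Real.rpow_nonneg (norm_nonneg y) γ), neg_neg]
    rw [h4] at h3; exact h3


private def Ann (n : ℕ) (r : ℝ) : Set (Eucl n) := closedBall 0 r \ ball 0 (r / 2)

private lemma ann_compact {n : ℕ} (r : ℝ) : IsCompact (Ann n r) :=
  (isCompact_closedBall _ _).diff isOpen_ball

private lemma ann_measurable {n : ℕ} (r : ℝ) : MeasurableSet (Ann n r) :=
  measurableSet_closedBall.diff measurableSet_ball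

private lemma mem_ann {n : ℕ} {r : ℝ} {y : Eucl n} (hy : y ∈ Ann n r) :
    r / 2 ≤ ‖y‖ ∧ ‖y‖ ≤ r := by
  obtain ⟨h1, h2⟩ := hy
  rw [mem_closedBall, dist_zero_right] at h1
  rw [mem_ball, dist_zero_right] at h2
  exact ⟨le_of_not_gt h2, h1⟩

private lemma inner_sq_integral {n : ℕ} (hn : 1 ≤ n) (r : ℝ) (ξ : Eucl n) :
    ∫ y in Ann n r, (inner ℝ ξ y : ℝ) ^ 2 ∂volume
      = ‖ξ‖ ^ 2 * ∫ y in Ann n r, (inner ℝ (EuclideanSpace.single ⟨0, hn⟩ (1:ℝ)) y : ℝ) ^ 2 ∂volume := by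
  set e₀ : Eucl n := EuclideanSpace.single ⟨0, hn⟩ (1:ℝ) with he₀
  have hnorm : ‖(‖ξ‖ • e₀ : Eucl n)‖ = ‖ξ‖ := by
    rw [norm_smul, he₀, EuclideanSpace.norm_single]
    simp [abs_of_nonneg (norm_nonneg ξ)]
  set T : Eucl n ≃ₗᵢ[ℝ] Eucl n := Submodule.reflection (Submodule.span ℝ {(‖ξ‖ • e₀ : Eucl n) - ξ})ᗮ with hT
  have hTx : T (‖ξ‖ • e₀) = ξ := Submodule.reflection_sub hnorm
  have hpre : ⇑T ⁻¹' (Ann n r) = Ann n r := by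
    ext y
    simp only [Ann, mem_preimage, mem_diff, mem_closedBall, mem_ball, dist_zero_right,
      T.norm_map]
  have hmp : MeasurePreserving (⇑T) (volume : Measure (Eucl n)) volume :=
    T.measurePreserving
  have hemb : MeasurableEmbedding (⇑T) := T.toHomeomorph.measurableEmbedding
  have step1 : ∫ y in Ann n r, (inner ℝ ξ y : ℝ) ^ 2 ∂volume
      = ∫ y in Ann n r, (inner ℝ ξ (T y) : ℝ) ^ 2 ∂volume := by
    rw [← hmp.setIntegral_preimage_emb hemb (fun y => (inner ℝ ξ y : ℝ) ^ 2) (Ann n r), hpre]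
  rw [step1]
  have step2 : ∀ y : Eucl n, (inner ℝ ξ (T y) : ℝ) = ‖ξ‖ * (inner ℝ e₀ y : ℝ) := by
    intro y
    calc (inner ℝ ξ (T y) : ℝ) = (inner ℝ (T (‖ξ‖ • e₀)) (T y) : ℝ) := by rw [hTx]
      _ = (inner ℝ (‖ξ‖ • e₀) y : ℝ) := T.inner_map_map _ _
      _ = ‖ξ‖ * (inner ℝ e₀ y : ℝ) := real_inner_smul_left _ _ _
  calc ∫ y in Ann n r, (inner ℝ ξ (T y) : ℝ) ^ 2 ∂volume
      = ∫ y in Ann n r, ‖ξ‖ ^ 2 * (inner ℝ e₀ y : ℝ) ^ 2 ∂volume := by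
        refine setIntegral_congr_fun (ann_measurable r) (fun y _ => ?_)
        rw [step2 y]; ring
    _ = ‖ξ‖ ^ 2 * ∫ y in Ann n r, (inner ℝ e₀ y : ℝ) ^ 2 ∂volume := by
        rw [integral_const_mul]

private lemma inner_sq_integrableOn {n : ℕ} (r : ℝ) (ξ : Eucl n) :
    IntegrableOn (fun y : Eucl n => (inner ℝ ξ y : ℝ) ^ 2) (Ann n r) volume := by
  refine ContinuousOn.integrableOn_compact (ann_compact r) ?_
  exact ((continuous_const.inner continuous_id).pow 2).continuousOn

private lemma K_lb {n : ℕ} (hn : 1 ≤ n) {r : ℝ} (hr : 0 < r) :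
    (r / 2) ^ 2 * (volume (Ann n r)).toReal
      ≤ (n : ℝ) * ∫ y in Ann n r, (inner ℝ (EuclideanSpace.single ⟨0, hn⟩ (1:ℝ)) y : ℝ) ^ 2 ∂volume := by
  have hμ : volume (Ann n r) ≠ ⊤ := (ann_compact r).measure_lt_top.ne
  have h1 : (r / 2) ^ 2 * (volume (Ann n r)).toReal ≤ ∫ y in Ann n r, ‖y‖ ^ 2 ∂volume := by
    refine setIntegral_ge_of_const_le_real (ann_measurable r) hμ (fun y hy => ?_) ?_
    · have := (mem_ann hy).1
      have h2 : (0:ℝ) ≤ r / 2 := by linarith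
      exact pow_le_pow_left₀ h2 this 2
    · exact ContinuousOn.integrableOn_compact (ann_compact r)
        ((continuous_norm.pow 2).continuousOn)
  have h2 : ∫ y in Ann n r, ‖y‖ ^ 2 ∂volume
      = ∑ i : Fin n, ∫ y in Ann n r, (inner ℝ (EuclideanSpace.single i (1:ℝ)) y : ℝ) ^ 2 ∂volume := by
    rw [← integral_finset_sum _ (fun i _ => inner_sq_integrableOn r _)]
    refine setIntegral_congr_fun (ann_measurable r) (fun y _ => ?_)
    have : ∀ i : Fin n, (inner ℝ (EuclideanSpace.single i (1:ℝ)) y : ℝ) = y i := by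
      intro i; rw [EuclideanSpace.inner_single_left]; simp
    simp only [this]
    rw [← real_inner_self_eq_norm_sq, PiLp.inner_apply]
    simp [RCLike.inner_apply, sq]
  have h3 : ∀ i : Fin n,
      ∫ y in Ann n r, (inner ℝ (EuclideanSpace.single i (1:ℝ)) y : ℝ) ^ 2 ∂volume
      = ∫ y in Ann n r, (inner ℝ (EuclideanSpace.single ⟨0, hn⟩ (1:ℝ)) y : ℝ) ^ 2 ∂volume := by
    intro i
    have := inner_sq_integral hn r (EuclideanSpace.single i (1:ℝ))
    rw [EuclideanSpace.norm_single] at this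
    simpa using this
  calc (r / 2) ^ 2 * (volume (Ann n r)).toReal
      ≤ ∫ y in Ann n r, ‖y‖ ^ 2 ∂volume := h1
    _ = ∑ i : Fin n, ∫ y in Ann n r,
          (inner ℝ (EuclideanSpace.single i (1:ℝ)) y : ℝ) ^ 2 ∂volume := h2
    _ = (n : ℝ) * ∫ y in Ann n r,
          (inner ℝ (EuclideanSpace.single ⟨0, hn⟩ (1:ℝ)) y : ℝ) ^ 2 ∂volume := by
        rw [Finset.sum_congr rfl (fun i _ => h3 i), Finset.sum_const, Finset.card_univ,
          Fintype.card_fin, nsmul_eq_mul]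


private lemma tail_measurable (n : ℕ) : MeasurableSet {y : Eucl n | 1 ≤ ‖y‖} := by
  have : {y : Eucl n | 1 ≤ ‖y‖} = (fun y : Eucl n => ‖y‖) ⁻¹' (Ici 1) := rfl
  rw [this]; exact measurable_norm measurableSet_Ici

private lemma ae_ne_zero {n : ℕ} (hn : 1 ≤ n) :
    ∀ᵐ (y : Eucl n) ∂volume, y ≠ (0 : Eucl n) := by
  haveI : Nontrivial (Eucl n) := nontriv_eucl hn
  have h : {y : Eucl n | ¬ y ≠ 0} = {0} := by ext y; simp
  rw [ae_iff, h]
  exact measure_singleton 0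

private lemma integrable_symbol {n : ℕ} (hn : 1 ≤ n) {α δ c₂ : ℝ} (hα0 : 0 < α) (hα2 : α < 2)
    (hδ : 0 < δ) (hc₂ : 0 ≤ c₂) {pik : Eucl n → ℝ} (hmeas : Measurable pik)
    (hnn : ∀ y : Eucl n, y ≠ 0 → 0 ≤ pik y)
    (hb1 : ∀ y : Eucl n, 0 < ‖y‖ → ‖y‖ ≤ 1 → pik y ≤ c₂ * ‖y‖ ^ (-(n:ℝ) - α))
    (hb2 : ∀ y : Eucl n, 1 < ‖y‖ → pik y ≤ c₂ * ‖y‖ ^ (-(n:ℝ) - δ))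
    (ξ : Eucl n) :
    Integrable (fun y : Eucl n => (1 - Real.cos (inner ℝ ξ y : ℝ)) * pik y) volume := by
  have hcont : Continuous (fun y : Eucl n => (inner ℝ ξ y : ℝ)) :=
    continuous_const.inner continuous_id
  have hfmeas : Measurable (fun y : Eucl n => (1 - Real.cos (inner ℝ ξ y : ℝ)) * pik y) :=
    ((continuous_const.sub (Real.continuous_cos.comp hcont)).measurable).mul hmeas
  set g : Eucl n → ℝ := fun y =>
    (ball (0 : Eucl n) 1).indicator (fun y => (c₂ * ‖ξ‖ ^ 2 / 2) * ‖y‖ ^ (2 - (n:ℝ) - α)) y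
    + {y : Eucl n | 1 ≤ ‖y‖}.indicator (fun y => (2 * c₂) * ‖y‖ ^ (-(n:ℝ) - δ)) y with hg
  have hg_int : Integrable g volume := by
    refine Integrable.add ?_ ?_
    · exact IntegrableOn.integrable_indicator
        ((intOn_ball (β := 2 - (n:ℝ) - α) hn (by linarith)).const_mul _) measurableSet_ball
    · exact IntegrableOn.integrable_indicator
        ((intOn_tail (γ := -(n:ℝ) - δ) (by linarith)).const_mul _) (tail_measurable n)
  refine hg_int.mono' hfmeas.aestronglyMeasurable ?_
  refine (ae_ne_zero hn).mono (fun y hy => ?_)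
  have hynorm : 0 < ‖y‖ := norm_pos_iff.2 hy
  have hpik : 0 ≤ pik y := hnn y hy
  set t : ℝ := (inner ℝ ξ y : ℝ) with ht
  have hcos1 : 1 - Real.cos t ≤ t ^ 2 / 2 := by
    have := Real.one_sub_sq_div_two_le_cos (x := t); linarith
  have hcos2 : 0 ≤ 1 - Real.cos t := by have := Real.cos_le_one t; linarith
  have habs : ‖(1 - Real.cos t) * pik y‖ = (1 - Real.cos t) * pik y := by
    rw [Real.norm_eq_abs, abs_of_nonneg (mul_nonneg hcos2 hpik)]
  rw [habs]
  rcases lt_or_ge ‖y‖ 1 with hlt | hge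
  · have hmem : y ∈ ball (0 : Eucl n) 1 := by rwa [mem_ball, dist_zero_right]
    have hnotmem : y ∉ {y : Eucl n | 1 ≤ ‖y‖} := not_le.2 hlt
    have hgy : g y = (c₂ * ‖ξ‖ ^ 2 / 2) * ‖y‖ ^ (2 - (n:ℝ) - α) := by
      rw [hg]; dsimp only
      rw [indicator_of_mem hmem, indicator_of_notMem hnotmem, add_zero]
    have hinner : t ^ 2 ≤ ‖ξ‖ ^ 2 * ‖y‖ ^ 2 := by
      have h := abs_real_inner_le_norm ξ y
      have h2 := sq_abs t
      nlinarith [abs_nonneg t, norm_nonneg ξ, norm_nonneg y]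
    calc (1 - Real.cos t) * pik y
        ≤ (t ^ 2 / 2) * (c₂ * ‖y‖ ^ (-(n:ℝ) - α)) :=
          mul_le_mul hcos1 (hb1 y hynorm hlt.le) hpik (by positivity)
      _ ≤ (‖ξ‖ ^ 2 * ‖y‖ ^ 2 / 2) * (c₂ * ‖y‖ ^ (-(n:ℝ) - α)) := by
          have h0 : 0 ≤ c₂ * ‖y‖ ^ (-(n:ℝ) - α) := by positivity
          apply mul_le_mul_of_nonneg_right (by linarith) h0
      _ = (c₂ * ‖ξ‖ ^ 2 / 2) * (‖y‖ ^ (2:ℕ) * ‖y‖ ^ (-(n:ℝ) - α)) := by ring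
      _ = (c₂ * ‖ξ‖ ^ 2 / 2) * ‖y‖ ^ (2 - (n:ℝ) - α) := by
          rw [← Real.rpow_natCast ‖y‖ 2, ← Real.rpow_add hynorm]
          congr 1
          push_cast
          ring_nf
      _ = g y := hgy.symm
  · have hmem2 : y ∈ {y : Eucl n | 1 ≤ ‖y‖} := hge
    have hnot : y ∉ ball (0 : Eucl n) 1 := by
      rw [mem_ball, dist_zero_right]; exact not_lt.2 hge
    have hgy : g y = (2 * c₂) * ‖y‖ ^ (-(n:ℝ) - δ) := by
      rw [hg]; dsimp only
      rw [indicator_of_notMem hnot, indicator_of_mem hmem2, zero_add]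
    have hpik2 : pik y ≤ c₂ * ‖y‖ ^ (-(n:ℝ) - δ) := by
      rcases eq_or_lt_of_le hge with heq | hlt2
      · have h := hb1 y hynorm (le_of_eq heq.symm)
        rw [← heq] at h ⊢
        rw [Real.one_rpow] at h
        rw [Real.one_rpow]
        exact h
      · exact hb2 y hlt2
    have hcos3 : 1 - Real.cos t ≤ 2 := by have := Real.neg_one_le_cos t; linarith
    calc (1 - Real.cos t) * pik y ≤ 2 * (c₂ * ‖y‖ ^ (-(n:ℝ) - δ)) :=
        mul_le_mul hcos3 hpik2 hpik (by norm_num)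
      _ = (2 * c₂) * ‖y‖ ^ (-(n:ℝ) - δ) := by ring
      _ = g y := hgy.symm


/-- Lower bound on the Lévy symbol: under hypothesis [ND], the symbol
`a(ξ) = ∫ (1 - cos⟪ξ,y⟫) π(y) dy` satisfies `|ξ|^α ≤ C₁ a(ξ) + C₂` with constants
depending only on `n, α, c₁`. -/
theorem statement6
    (n : ℕ) (hn : 1 ≤ n) (α : ℝ) (hαpos : 0 < α) (hα2 : α < 2)
    (c₁ : ℝ) (hc₁ : 0 < c₁) :
    ∃ C₁ : ℝ, 0 < C₁ ∧ ∃ C₂ : ℝ, 0 < C₂ ∧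
      ∀ δ c₂ : ℝ, 0 < δ → δ < α → c₁ ≤ c₂ →
      ∀ pik : EuclideanSpace ℝ (Fin n) → ℝ,
        Measurable pik →
        (∀ y, pik (-y) = pik y) →
        (∀ y : EuclideanSpace ℝ (Fin n), 0 < ‖y‖ → ‖y‖ ≤ 1 →
          c₁ * ‖y‖ ^ (-(n : ℝ) - α) ≤ pik y ∧ pik y ≤ c₂ * ‖y‖ ^ (-(n : ℝ) - α)) →
        (∀ y : EuclideanSpace ℝ (Fin n), 1 < ‖y‖ →
          0 ≤ pik y ∧ pik y ≤ c₂ * ‖y‖ ^ (-(n : ℝ) - δ)) →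
      ∀ ξ : EuclideanSpace ℝ (Fin n),
        ‖ξ‖ ^ α ≤ C₁ * (∫ y, (1 - Real.cos (inner ℝ ξ y : ℝ)) * pik y) + C₂ := by
  haveI : Nontrivial (Eucl n) := nontriv_eucl hn
  have hnR : (0:ℝ) < n := by exact_mod_cast Nat.lt_of_lt_of_le Nat.zero_lt_one hn
  set ω' : ℝ := (volume (ball (0 : Eucl n) 1)).toReal with hω'
  have hω'pos : 0 < ω' :=
    ENNReal.toReal_pos (measure_ball_pos volume 0 one_pos).ne' measure_ball_lt_top.ne
  have hhalf : (2:ℝ)⁻¹ ^ n < 1 := pow_lt_one₀ (by norm_num) (by norm_num) (by omega)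
  have hhalf0 : (0:ℝ) < (2:ℝ)⁻¹ ^ n := by positivity
  set c₀ : ℝ := c₁ * ω' * (1 - (2:ℝ)⁻¹ ^ n) / (32 * n) with hc₀
  have hc₀pos : 0 < c₀ := by
    apply div_pos
    · apply mul_pos (mul_pos hc₁ hω'pos); linarith
    · linarith
  refine ⟨c₀⁻¹, inv_pos.2 hc₀pos, 1, one_pos, ?_⟩
  intro δ c₂ hδ hδα hcc pik hmeas hsymm hnear hfar ξ
  have hnn : ∀ y : Eucl n, y ≠ 0 → 0 ≤ pik y := by
    intro y hy
    have hy0 : 0 < ‖y‖ := norm_pos_iff.2 hy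
    rcases le_or_gt ‖y‖ 1 with h1 | h1
    · have hlow := (hnear y hy0 h1).1
      have hpos : 0 ≤ c₁ * ‖y‖ ^ (-(n:ℝ) - α) := by positivity
      linarith
    · exact (hfar y h1).1
  have hint : Integrable (fun y : Eucl n => (1 - Real.cos (inner ℝ ξ y : ℝ)) * pik y) volume :=
    integrable_symbol hn hαpos hα2 hδ (le_trans hc₁.le hcc) hmeas hnn
      (fun y a b => (hnear y a b).2) (fun y a => (hfar y a).2) ξ
  have hae0 : 0 ≤ᵐ[volume] fun y : Eucl n => (1 - Real.cos (inner ℝ ξ y : ℝ)) * pik y :=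
    (ae_ne_zero hn).mono (fun y hy => by
      have h1 := Real.cos_le_one (inner ℝ ξ y : ℝ)
      have := hnn y hy
      simp only [Pi.zero_apply]
      nlinarith)
  have hint_nonneg : 0 ≤ ∫ y, (1 - Real.cos (inner ℝ ξ y : ℝ)) * pik y :=
    integral_nonneg_of_ae hae0
  rcases lt_or_ge ‖ξ‖ 1 with hξ | hξ
  · have h1 : ‖ξ‖ ^ α ≤ 1 := Real.rpow_le_one (norm_nonneg ξ) hξ.le hαpos.le
    have h2 : 0 ≤ c₀⁻¹ * ∫ y, (1 - Real.cos (inner ℝ ξ y : ℝ)) * pik y :=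
      mul_nonneg (inv_nonneg.2 hc₀pos.le) hint_nonneg
    linarith
  · have hξ0 : 0 < ‖ξ‖ := lt_of_lt_of_le one_pos hξ
    set r : ℝ := ‖ξ‖⁻¹ with hrdef
    have hr0 : 0 < r := inv_pos.2 hξ0
    have hrξ : r * ‖ξ‖ = 1 := inv_mul_cancel₀ hξ0.ne'
    have hr1 : r ≤ 1 := by
      rw [hrdef]
      exact inv_le_one_of_one_le₀ hξ
    set K := ∫ y in Ann n r, (inner ℝ (EuclideanSpace.single ⟨0, hn⟩ (1:ℝ)) y : ℝ) ^ 2 ∂volume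
      with hKdef
    -- pointwise bound on the annulus
    have hpt : ∀ y ∈ Ann n r,
        (c₁ / 8 * r ^ (-(n:ℝ) - α)) * (inner ℝ ξ y : ℝ) ^ 2
          ≤ (1 - Real.cos (inner ℝ ξ y : ℝ)) * pik y := by
      intro y hy
      obtain ⟨hy1, hy2⟩ := mem_ann hy
      have hy0 : 0 < ‖y‖ := lt_of_lt_of_le (by linarith) hy1
      have hyle1 : ‖y‖ ≤ 1 := le_trans hy2 hr1
      have htb : |(inner ℝ ξ y : ℝ)| ≤ 1 := by
        have h := abs_real_inner_le_norm ξ y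
        have h2 : ‖ξ‖ * ‖y‖ ≤ ‖ξ‖ * r := mul_le_mul_of_nonneg_left hy2 (norm_nonneg ξ)
        nlinarith
      have hcos := cos_lb htb
      have hlow := (hnear y hy0 hyle1).1
      have hrle : r ^ (-(n:ℝ) - α) ≤ ‖y‖ ^ (-(n:ℝ) - α) :=
        Real.rpow_le_rpow_of_nonpos hy0 hy2 (by linarith)
      have h1 : c₁ * r ^ (-(n:ℝ) - α) ≤ pik y :=
        le_trans (mul_le_mul_of_nonneg_left hrle hc₁.le) hlow
      have hcosnn : 0 ≤ 1 - Real.cos (inner ℝ ξ y : ℝ) := by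
        have := Real.cos_le_one (inner ℝ ξ y : ℝ); linarith
      calc (c₁ / 8 * r ^ (-(n:ℝ) - α)) * (inner ℝ ξ y : ℝ) ^ 2
          = ((inner ℝ ξ y : ℝ) ^ 2 / 8) * (c₁ * r ^ (-(n:ℝ) - α)) := by ring
        _ ≤ (1 - Real.cos (inner ℝ ξ y : ℝ)) * pik y :=
            mul_le_mul hcos h1 (by positivity) hcosnn
    have step1 : (∫ y in Ann n r, (1 - Real.cos (inner ℝ ξ y : ℝ)) * pik y ∂volume)
        ≤ ∫ y, (1 - Real.cos (inner ℝ ξ y : ℝ)) * pik y := setIntegral_le_integral hint hae0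
    have step2 : (∫ y in Ann n r, (c₁ / 8 * r ^ (-(n:ℝ) - α)) * (inner ℝ ξ y : ℝ) ^ 2 ∂volume)
        ≤ ∫ y in Ann n r, (1 - Real.cos (inner ℝ ξ y : ℝ)) * pik y ∂volume :=
      setIntegral_mono_on ((inner_sq_integrableOn r ξ).const_mul _) hint.integrableOn
        (ann_measurable r) hpt
    have step3 : (∫ y in Ann n r, (c₁ / 8 * r ^ (-(n:ℝ) - α)) * (inner ℝ ξ y : ℝ) ^ 2 ∂volume)
        = (c₁ / 8 * r ^ (-(n:ℝ) - α)) * (‖ξ‖ ^ 2 * K) := by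
      rw [integral_const_mul, inner_sq_integral hn r ξ]
    have step4 := K_lb hn (r := r) hr0
    -- volume of the annulus
    have hsubann : ball (0 : Eucl n) (r/2) ⊆ closedBall (0 : Eucl n) r :=
      ball_subset_closedBall.trans (closedBall_subset_closedBall (by linarith))
    have hballs : volume (ball (0 : Eucl n) (r/2))
        = ENNReal.ofReal ((r/2)^n) * volume (ball (0 : Eucl n) 1) := by
      rw [Measure.addHaar_ball (volume : Measure (Eucl n)) 0 (by linarith),
        finrank_euclideanSpace_fin]
    have hcb : volume (closedBall (0 : Eucl n) r)
        = ENNReal.ofReal (r^n) * volume (ball (0 : Eucl n) 1) := by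
      rw [Measure.addHaar_closedBall (volume : Measure (Eucl n)) 0 hr0.le,
        finrank_euclideanSpace_fin]
    have hvol : (volume (Ann n r)).toReal = (r^n - (r/2)^n) * ω' := by
      have h1 : volume (Ann n r)
          = volume (closedBall (0 : Eucl n) r) - volume (ball (0 : Eucl n) (r/2)) :=
        measure_diff hsubann measurableSet_ball.nullMeasurableSet measure_ball_lt_top.ne
      rw [h1, ENNReal.toReal_sub_of_le (measure_mono hsubann) measure_closedBall_lt_top.ne,
        hballs, hcb, ENNReal.toReal_mul, ENNReal.toReal_mul,
        ENNReal.toReal_ofReal (by positivity), ENNReal.toReal_ofReal (by positivity)]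
      ring
    have hvol' : (volume (Ann n r)).toReal = r^n * (1 - (2:ℝ)⁻¹^n) * ω' := by
      rw [hvol]; ring
    rw [hvol'] at step4
    have hK2 : (r/2)^2 * (r^n * (1 - (2:ℝ)⁻¹^n) * ω') / n ≤ K := by
      rw [div_le_iff₀ hnR]
      linarith
    have main1 : (c₁ / 8 * r ^ (-(n:ℝ) - α)) * (‖ξ‖ ^ 2 * K)
        ≤ ∫ y, (1 - Real.cos (inner ℝ ξ y : ℝ)) * pik y := by
      rw [← step3]; exact le_trans step2 step1
    have main2 : (c₁ / 8 * r ^ (-(n:ℝ) - α))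
          * (‖ξ‖ ^ 2 * ((r/2)^2 * (r^n * (1 - (2:ℝ)⁻¹^n) * ω') / n))
        ≤ ∫ y, (1 - Real.cos (inner ℝ ξ y : ℝ)) * pik y := by
      refine le_trans ?_ main1
      refine mul_le_mul_of_nonneg_left ?_ (by positivity)
      exact mul_le_mul_of_nonneg_left hK2 (sq_nonneg _)
    have hpow : r ^ (-(n:ℝ) - α) * r ^ (2:ℕ) * r ^ (n:ℕ) * ‖ξ‖ ^ (2:ℕ) = ‖ξ‖ ^ α := by
      rw [← Real.rpow_natCast r 2, ← Real.rpow_natCast r n, ← Real.rpow_natCast ‖ξ‖ 2,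
        ← Real.rpow_add hr0, ← Real.rpow_add hr0,
        show (-(n:ℝ) - α) + ((2:ℕ):ℝ) + ((n:ℕ):ℝ) = 2 - α by push_cast; ring,
        hrdef, Real.inv_rpow (norm_nonneg ξ), ← Real.rpow_neg (norm_nonneg ξ),
        ← Real.rpow_add hξ0,
        show -(2 - α) + ((2:ℕ):ℝ) = α by push_cast; ring]
    have hfinal : c₀ * ‖ξ‖ ^ α = (c₁ / 8 * r ^ (-(n:ℝ) - α))
          * (‖ξ‖ ^ 2 * ((r/2)^2 * (r^n * (1 - (2:ℝ)⁻¹^n) * ω') / n)) := by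
      rw [← hpow, hc₀]
      have hne : (n:ℝ) ≠ 0 := hnR.ne'
      field_simp
      ring
    have hmain3 : c₀ * ‖ξ‖ ^ α ≤ ∫ y, (1 - Real.cos (inner ℝ ξ y : ℝ)) * pik y := by
      rw [hfinal]; exact main2
    have h4 : ‖ξ‖ ^ α ≤ c₀⁻¹ * ∫ y, (1 - Real.cos (inner ℝ ξ y : ℝ)) * pik y := by
      have := mul_le_mul_of_nonneg_left hmain3 (inv_nonneg.2 hc₀pos.le)
      rwa [← mul_assoc, inv_mul_cancel₀ hc₀pos.ne', one_mul] at this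
    linarith
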